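/- Let p = (f_1,f_2,f_3) and q = (g_1,g_2,g_3) be nondecreasing integer triples with entries ≥ 3 and negative combinatorial curvature. Suppose there exist indices {l,m,n} = {1,2,3} with m < n such that f_l ≥ g_l and f_m - g_m > g_n - f_n > 0. Then for every a > 0, Σ_{i=1}^3 β(f_i, a) > Σ_{i=1}^3 β(g_i, a), where β(x,a) = 2·arcsin(cos(π/x)/cosh(a/2)); consequently K_{a_c(p)}(q) > 0. -/

import Mathlib

open Real

/-- `β(n,a) = 2·arcsin(cos(π/n)/cosh(a/2))`. -/
noncomputable def beta (n : ℕ) (a : ℝ) : ℝ :=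
  2 * Real.arcsin (Real.cos (π / n) / Real.cosh (a / 2))

/-- Combinatorial curvature of a degree-3 pattern. -/
noncomputable def Phi3 (f : Fin 3 → ℕ) : ℝ :=
  -(1 / 2) + ∑ i, (1 : ℝ) / (f i)

noncomputable def Bfun (c x : ℝ) : ℝ := 2 * Real.arcsin (Real.cos (π / x) / c)

noncomputable def Dfun (c x : ℝ) : ℝ :=
  2 * π * Real.sin (π / x) / (x ^ 2 * Real.sqrt (c ^ 2 - Real.cos (π / x) ^ 2))

lemma hasDerivAt_Bfun {c x : ℝ} (hc : 1 < c) (hx : 3 ≤ x) :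
    HasDerivAt (Bfun c) (Dfun c x) x := by
  have hx0 : x ≠ 0 := by linarith
  have hc0 : (0 : ℝ) < c := by linarith
  have hcos : |Real.cos (π / x)| ≤ 1 := Real.abs_cos_le_one _
  have hu : |Real.cos (π / x) / c| < 1 := by
    rw [abs_div, abs_of_pos hc0, div_lt_one hc0]
    exact lt_of_le_of_lt hcos hc
  have hu1 : Real.cos (π / x) / c ≠ -1 := by
    intro h; rw [h] at hu; norm_num at hu
  have hu2 : Real.cos (π / x) / c ≠ 1 := by
    intro h; rw [h] at hu; norm_num at hu
  have step1 : HasDerivAt (fun y : ℝ => π / y) (-(π / x ^ 2)) x := by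
    have h := (hasDerivAt_inv hx0).const_mul π
    refine h.congr_deriv (Eq.symm ?_)
    ring
  have step2 : HasDerivAt (fun y : ℝ => Real.cos (π / y))
      (Real.sin (π / x) * (π / x ^ 2)) x := by
    have h := (Real.hasDerivAt_cos (π / x)).comp x step1
    refine h.congr_deriv (Eq.symm ?_)
    ring
  have step3 : HasDerivAt (fun y : ℝ => Real.cos (π / y) / c)
      (Real.sin (π / x) * (π / x ^ 2) / c) x := step2.div_const c
  have step4 := ((Real.hasDerivAt_arcsin hu1 hu2).comp x step3).const_mul 2
  refine step4.congr_deriv (Eq.symm ?_)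
  have hpos : 0 < c ^ 2 - Real.cos (π / x) ^ 2 := by
    nlinarith [Real.abs_cos_le_one (π / x), abs_nonneg (Real.cos (π / x)),
      sq_abs (Real.cos (π / x))]
  have hsq : Real.sqrt (1 - (Real.cos (π / x) / c) ^ 2)
      = Real.sqrt (c ^ 2 - Real.cos (π / x) ^ 2) / c := by
    have key : 1 - (Real.cos (π / x) / c) ^ 2
        = (c ^ 2 - Real.cos (π / x) ^ 2) / c ^ 2 := by
      field_simp
    rw [key, Real.sqrt_div hpos.le, Real.sqrt_sq hc0.le]
  rw [Dfun, hsq]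
  have hs0 : Real.sqrt (c ^ 2 - Real.cos (π / x) ^ 2) ≠ 0 := by
    positivity
  field_simp

lemma Dfun_pos {c x : ℝ} (hc : 1 < c) (hx : 3 ≤ x) : 0 < Dfun c x := by
  have hx0 : (0 : ℝ) < x := by linarith
  have hsin : 0 < Real.sin (π / x) := by
    apply Real.sin_pos_of_pos_of_lt_pi
    · positivity
    · rw [div_lt_iff₀ hx0]; nlinarith [Real.pi_pos]
  have hpos : 0 < c ^ 2 - Real.cos (π / x) ^ 2 := by
    nlinarith [Real.abs_cos_le_one (π / x), abs_nonneg (Real.cos (π / x)),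
      sq_abs (Real.cos (π / x))]
  have := Real.pi_pos
  rw [Dfun]
  positivity

lemma P_mono {k s t : ℝ} (hk : 0 < k) (hs : 0 < s) (hst : s < t) :
    s / Real.sqrt (k + s ^ 2) < t / Real.sqrt (k + t ^ 2) := by
  have h1 : (0 : ℝ) < Real.sqrt (k + s ^ 2) := Real.sqrt_pos.2 (by positivity)
  have h2 : (0 : ℝ) < Real.sqrt (k + t ^ 2) := Real.sqrt_pos.2 (by positivity)
  rw [div_lt_div_iff₀ h1 h2]
  have hss : Real.sqrt (k + s ^ 2) ^ 2 = k + s ^ 2 := Real.sq_sqrt (by positivity)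
  have htt : Real.sqrt (k + t ^ 2) ^ 2 = k + t ^ 2 := Real.sq_sqrt (by positivity)
  have ht : (0:ℝ) < t := hs.trans hst
  apply lt_of_pow_lt_pow_left₀ 2 (mul_nonneg ht.le h1.le)
  rw [mul_pow, mul_pow, hss, htt]
  nlinarith [mul_pos (mul_pos hk (sub_pos.2 hst)) (by linarith : (0:ℝ) < t + s)]

lemma Dfun_anti {c x y : ℝ} (hc : 1 < c) (hx : 3 ≤ x) (hxy : x < y) :
    Dfun c y < Dfun c x := by
  have hpi := Real.pi_pos
  have hx0 : (0 : ℝ) < x := by linarith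
  have hy0 : (0 : ℝ) < y := by linarith
  have hk : (0 : ℝ) < c ^ 2 - 1 := by nlinarith
  set t1 := π / x with ht1
  set t2 := π / y with ht2
  have ht2pos : 0 < t2 := by positivity
  have ht21 : t2 < t1 := by
    apply div_lt_div_of_pos_left hpi hx0 hxy
  have ht1le : t1 ≤ π / 2 := by
    rw [ht1, div_le_div_iff₀ hx0 (by norm_num)]; nlinarith
  have hsin2 : 0 < Real.sin t2 :=
    Real.sin_pos_of_pos_of_lt_pi ht2pos (by nlinarith)
  have hsinlt : Real.sin t2 < Real.sin t1 :=
    Real.strictMonoOn_sin ⟨by linarith, by linarith⟩ ⟨by linarith, ht1le⟩ ht21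
  have hrw : ∀ z : ℝ, 0 < z →
      Dfun c z = 2 / π * ((π / z) ^ 2 *
        (Real.sin (π / z) / Real.sqrt ((c ^ 2 - 1) + Real.sin (π / z) ^ 2))) := by
    intro z hz
    have hcs : c ^ 2 - Real.cos (π / z) ^ 2 = (c ^ 2 - 1) + Real.sin (π / z) ^ 2 := by
      have := Real.sin_sq_add_cos_sq (π / z)
      linarith
    rw [Dfun, hcs]
    field_simp
  rw [hrw x hx0, hrw y hy0, ← ht1, ← ht2]
  have hP : Real.sin t2 / Real.sqrt ((c ^ 2 - 1) + Real.sin t2 ^ 2)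
      < Real.sin t1 / Real.sqrt ((c ^ 2 - 1) + Real.sin t1 ^ 2) :=
    P_mono hk hsin2 hsinlt
  have hP2 : 0 < Real.sin t2 / Real.sqrt ((c ^ 2 - 1) + Real.sin t2 ^ 2) := by
    have : (0:ℝ) < Real.sqrt ((c ^ 2 - 1) + Real.sin t2 ^ 2) :=
      Real.sqrt_pos.2 (by positivity)
    positivity
  have htsq : t2 ^ 2 < t1 ^ 2 := by nlinarith
  have h2pi : (0 : ℝ) < 2 / π := by positivity
  apply mul_lt_mul_of_pos_left _ h2pi
  nlinarith [sq_nonneg t2]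

lemma Bfun_mono {c x y : ℝ} (hc : 1 < c) (hx : 3 ≤ x) (hxy : x ≤ y) :
    Bfun c x ≤ Bfun c y := by
  have hpi := Real.pi_pos
  have hx0 : (0 : ℝ) < x := by linarith
  have hy0 : (0 : ℝ) < y := by linarith
  have hcos : Real.cos (π / x) ≤ Real.cos (π / y) := by
    apply Real.cos_le_cos_of_nonneg_of_le_pi (by positivity)
    · rw [div_le_iff₀ hx0]; nlinarith
    · apply div_le_div_of_nonneg_left hpi.le hx0 hxy |>.trans_eq rfl
  have : Real.cos (π / x) / c ≤ Real.cos (π / y) / c := by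
    gcongr
  exact mul_le_mul_of_nonneg_left (Real.monotone_arcsin this) (by norm_num)

lemma Bfun_key {c gm fm fn gn : ℝ} (hc : 1 < c) (h3 : 3 ≤ gm)
    (h1 : gm < fm) (h2 : fm ≤ fn) (h4 : fn < gn) (hgap : gn - fn < fm - gm) :
    Bfun c gm + Bfun c gn < Bfun c fm + Bfun c fn := by
  have hcont : ∀ s : Set ℝ, (∀ z ∈ s, 3 ≤ z) → ContinuousOn (Bfun c) s := by
    intro s hs
    exact fun z hz => (hasDerivAt_Bfun hc (hs z hz)).continuousAt.continuousWithinAt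
  obtain ⟨ξ, hξ, hξeq⟩ := exists_hasDerivAt_eq_slope (Bfun c) (Dfun c) h1
    (hcont _ (fun z hz => le_trans h3 hz.1))
    (fun z hz => hasDerivAt_Bfun hc (by linarith [hz.1]))
  obtain ⟨η, hη, hηeq⟩ := exists_hasDerivAt_eq_slope (Bfun c) (Dfun c) h4
    (hcont _ (fun z hz => by linarith [hz.1]))
    (fun z hz => hasDerivAt_Bfun hc (by linarith [hz.1]))
  have hξ3 : 3 ≤ ξ := by linarith [hξ.1]
  have hDlt : Dfun c η < Dfun c ξ := Dfun_anti hc hξ3 (by linarith [hξ.2, hη.1])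
  have hDη : 0 < Dfun c η := Dfun_pos hc (by linarith [hη.1])
  rw [eq_div_iff (by intro h; rw [sub_eq_zero] at h; linarith : fm - gm ≠ 0)] at hξeq
  rw [eq_div_iff (by intro h; rw [sub_eq_zero] at h; linarith : gn - fn ≠ 0)] at hηeq
  nlinarith [mul_lt_mul_of_pos_right hDlt (by linarith : (0:ℝ) < gn - fn),
    mul_lt_mul_of_pos_left hgap (lt_trans hDη hDlt)]

/-- If `{l,m,n} = {1,2,3}`, `m < n`, `f_l ≥ g_l` and `f_m - g_m > g_n - f_n > 0`,
then `Σ β(f_i,a) > Σ β(g_i,a)` for every `a > 0`; in particular, at the critical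
side length `a_c(p)` of `p = (f₁,f₂,f₃)` the angle defect of `q = (g₁,g₂,g₃)` is
positive: `K_{a_c(p)}(q) > 0`. -/
theorem stmt17 (f g : Fin 3 → ℕ) (hf : Monotone f) (hg : Monotone g)
    (hf3 : ∀ i, 3 ≤ f i) (hg3 : ∀ i, 3 ≤ g i)
    (hfneg : Phi3 f < 0) (hgneg : Phi3 g < 0)
    (hyp : ∃ l m n : Fin 3, ({l, m, n} : Finset (Fin 3)) = Finset.univ ∧ m < n ∧
      g l ≤ f l ∧ (0 : ℤ) < (g n : ℤ) - f n ∧ (g n : ℤ) - f n < (f m : ℤ) - g m) :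
    (∀ a : ℝ, 0 < a → ∑ i, beta (g i) a < ∑ i, beta (f i) a) ∧
    ∀ a : ℝ, 0 < a → 2 * π - ∑ i, beta (f i) a = 0 →
      0 < 2 * π - ∑ i, beta (g i) a := by
  obtain ⟨l, m, n, hunion, hmn, hl, h1, h2⟩ := hyp
  have hmn' : m ≠ n := ne_of_lt hmn
  have hcard : ({l, m, n} : Finset (Fin 3)).card = 3 := by rw [hunion]; simp
  have hlm : l ≠ m := by
    rintro rfl
    have hsub : ({l, l, n} : Finset (Fin 3)) ⊆ {l, n} := by
      intro x hx; simp at hx ⊢; tauto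
    have h2' : ({l, n} : Finset (Fin 3)).card ≤ 2 :=
      (Finset.card_insert_le _ _).trans (by simp)
    have := Finset.card_le_card hsub
    omega
  have hln : l ≠ n := by
    rintro rfl
    have hsub : ({l, m, l} : Finset (Fin 3)) ⊆ {l, m} := by
      intro x hx; simp at hx ⊢; tauto
    have h2' : ({l, m} : Finset (Fin 3)).card ≤ 2 :=
      (Finset.card_insert_le _ _).trans (by simp)
    have := Finset.card_le_card hsub
    omega
  have hsum : ∀ h : Fin 3 → ℝ, ∑ i, h i = h l + h m + h n := by
    intro h
    rw [← hunion, Finset.sum_insert (by simp [hlm, hln]), Finset.sum_pair hmn']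
    ring
  have main : ∀ a : ℝ, 0 < a → ∑ i, beta (g i) a < ∑ i, beta (f i) a := by
    intro a ha
    have hc : 1 < Real.cosh (a / 2) := Real.one_lt_cosh.2 (by positivity)
    have hbeta : ∀ k : ℕ, beta k a = Bfun (Real.cosh (a / 2)) k := fun k => rfl
    have hgmfm : (g m : ℝ) < (f m : ℝ) := by exact_mod_cast (by omega : g m < f m)
    have hfmfn : (f m : ℝ) ≤ (f n : ℝ) := by exact_mod_cast hf hmn.le
    have hfngn : (f n : ℝ) < (g n : ℝ) := by exact_mod_cast (by omega : f n < g n)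
    have hgap : (g n : ℝ) - f n < (f m : ℝ) - g m := by exact_mod_cast h2
    have h3gm : (3 : ℝ) ≤ g m := by exact_mod_cast hg3 m
    have h3gl : (3 : ℝ) ≤ g l := by exact_mod_cast hg3 l
    have hglfl : (g l : ℝ) ≤ (f l : ℝ) := by exact_mod_cast hl
    have hkey := Bfun_key hc h3gm hgmfm hfmfn hfngn hgap
    have hmono := Bfun_mono hc h3gl hglfl
    rw [hsum, hsum]
    simp only [hbeta]
    linarith
  refine ⟨main, fun a ha heq => ?_⟩
  have := main a ha
  linarith
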